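/- Suppose the single-sample loss c and the activation σ are C², and let θ*^r be an irreducible critical point of the width-r training loss L^r that is a strict saddle, i.e. there exists a direction β with βᵀ ∇²L^r(θ*^r) β < 0. Then every point θ*^m ∈ Θ̄_{r→m}(θ*^r) is also a strict saddle of L^m: the Hessian ∇²L^m(θ*^m) has at least one negative eigenvalue. -/

import Mathlib

/-- The parameter space of a width-`m` two-layer network: each neuron `i` carries an
incoming weight vector (the coordinates `(i, Sum.inl k)`) and an outgoing weight
vector (the coordinates `(i, Sum.inr o)`). -/
abbrev NNParam (din dout m : ℕ) := EuclideanSpace ℝ (Fin m × (Fin din ⊕ Fin dout))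

/-- The incoming weight vector of neuron `i`. -/
def wOf {din dout m : ℕ} (θ : NNParam din dout m) (i : Fin m) : Fin din → ℝ :=
  fun k => θ (i, Sum.inl k)

/-- The outgoing weight vector of neuron `i`. -/
def aOf {din dout m : ℕ} (θ : NNParam din dout m) (i : Fin m) : Fin dout → ℝ :=
  fun o => θ (i, Sum.inr o)

/-- The training loss `L^m(θ) = (1/N) ∑_{(x,y) ∈ Trn} c(f⁽²⁾(x|θ), y)` of the
two-layer network `f⁽²⁾(x|θ) = ∑ i, a_i σ(w_i · x)` of width `m`. -/
noncomputable def nnLoss {din dout : ℕ} (σ : ℝ → ℝ)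
    (c : (Fin dout → ℝ) → (Fin dout → ℝ) → ℝ)
    {N : ℕ} (x : Fin N → Fin din → ℝ) (y : Fin N → Fin dout → ℝ)
    (m : ℕ) (θ : NNParam din dout m) : ℝ :=
  (1 / N : ℝ) * ∑ n, c (fun o => ∑ i, aOf θ i o * σ (∑ k, wOf θ i k * x n k)) (y n)

/-- A point is irreducible if its incoming weight vectors are pairwise distinct
and no outgoing weight vector is zero. -/
def Irreducible' {din dout m : ℕ} (θ : NNParam din dout m) : Prop :=
  Function.Injective (wOf θ) ∧ ∀ i, aOf θ i ≠ 0

/-- Membership of a width-`m` point `θm` in the set of symmetry-induced critical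
points `Θ̄_{r→m}(θr)`, i.e. `⋃_{s, π ∈ S_m} P_π Γ̄_s(θr)`: there is a surjective
grouping map `g : Fin m → Fin r` (surjectivity encodes `k_t ≥ 1`) and coefficients
`β i` with, for each group `t`, `∑_{g i = t} β i = 1`, such that neuron `i` of `θm`
has incoming weight `w*_{g i}` and outgoing weight `β i • a*_{g i}`. -/
def InSymmetryInducedSet {din dout r m : ℕ}
    (θr : NNParam din dout r) (θm : NNParam din dout m) : Prop :=
  ∃ (g : Fin m → Fin r) (β : Fin m → ℝ),
    Function.Surjective g ∧
    (∀ i, wOf θm i = wOf θr (g i)) ∧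
    (∀ i, aOf θm i = β i • aOf θr (g i)) ∧
    (∀ t : Fin r, ∑ i ∈ Finset.univ.filter (fun i => g i = t), β i = 1)


section Aux

open InnerProductSpace RealInnerProductSpace

/-- The Fréchet–Riesz equivalence over `ℝ`, as a continuous linear equivalence. -/
noncomputable def dualEquiv (E : Type*) [NormedAddCommGroup E] [InnerProductSpace ℝ E]
    [CompleteSpace E] : (StrongDual ℝ E) ≃L[ℝ] E :=
  (toDual ℝ E).symm.toContinuousLinearEquiv

lemma gradient_eq_dualEquiv {E : Type*} [NormedAddCommGroup E] [InnerProductSpace ℝ E]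
    [CompleteSpace E] (f : E → ℝ) :
    gradient f = fun x => dualEquiv E (fderiv ℝ f x) := rfl

/-- The quadratic form of the Hessian `D(∇f)(θ)` equals the second Fréchet derivative. -/
lemma hess_quadform {E : Type*} [NormedAddCommGroup E] [InnerProductSpace ℝ E]
    [CompleteSpace E] (f : E → ℝ) (θ v : E) :
    ⟪fderiv ℝ (gradient f) θ v, v⟫ = fderiv ℝ (fderiv ℝ f) θ v v := by
  have h1 : fderiv ℝ (gradient f) θ = ((dualEquiv E : StrongDual ℝ E →L[ℝ] E)).comp
      (fderiv ℝ (fderiv ℝ f) θ) := by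
    rw [gradient_eq_dualEquiv]
    exact (dualEquiv E).comp_fderiv (f := fderiv ℝ f) (x := θ)
  rw [h1]
  simp only [ContinuousLinearMap.coe_comp', Function.comp_apply]
  exact toDual_symm_apply

lemma proj_contDiff {din dout m : ℕ} (j : Fin m × (Fin din ⊕ Fin dout)) :
    ContDiff ℝ 2 (fun θ : NNParam din dout m => θ j) :=
  by exact (EuclideanSpace.proj (𝕜 := ℝ) (ι := Fin m × (Fin din ⊕ Fin dout)) j).contDiff

/-- The training loss is C² when `σ` and `c` are. -/
lemma nnLoss_contDiff {din dout : ℕ} (σ : ℝ → ℝ) (hσ : ContDiff ℝ 2 σ)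
    (c : (Fin dout → ℝ) → (Fin dout → ℝ) → ℝ)
    (hcC2 : ∀ yv, ContDiff ℝ 2 (fun v => c v yv))
    {N : ℕ} (x : Fin N → Fin din → ℝ) (y : Fin N → Fin dout → ℝ) (m : ℕ) :
    ContDiff ℝ 2 (nnLoss σ c x y m) := by
  unfold nnLoss
  apply ContDiff.mul contDiff_const
  apply ContDiff.sum
  intro n _
  apply (hcC2 (y n)).comp
  apply contDiff_pi.2
  intro o
  apply ContDiff.sum
  intro i _
  apply ContDiff.mul
  · exact proj_contDiff (i, Sum.inr o)
  · apply hσ.comp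
    apply ContDiff.sum
    intro k _
    exact (proj_contDiff (i, Sum.inl k)).mul contDiff_const

/-- The linear embedding of width-`r` parameter directions into width-`m` directions
determined by a grouping `g` and coefficients `β`. -/
noncomputable def liftMap {din dout r m : ℕ} (g : Fin m → Fin r) (β : Fin m → ℝ) :
    NNParam din dout r →L[ℝ] NNParam din dout m :=
  LinearMap.toContinuousLinearMap
  { toFun := fun u => (WithLp.toLp 2 (fun p : Fin m × (Fin din ⊕ Fin dout) => Sum.elim (fun k => u (g p.1, Sum.inl k))
      (fun o => β p.1 * u (g p.1, Sum.inr o)) p.2) : NNParam din dout m)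
    map_add' := by
      intro u v; ext p
      obtain ⟨i, j⟩ := p
      cases j with
      | inl k => simp [PiLp.add_apply]
      | inr o => simp [PiLp.add_apply]; ring
    map_smul' := by
      intro s u; ext p
      obtain ⟨i, j⟩ := p
      cases j with
      | inl k => simp [PiLp.smul_apply]
      | inr o => simp [PiLp.smul_apply, smul_eq_mul]; ring }

lemma liftMap_apply {din dout r m : ℕ} (g : Fin m → Fin r) (β : Fin m → ℝ)
    (u : NNParam din dout r) (p : Fin m × (Fin din ⊕ Fin dout)) :
    liftMap g β u p = Sum.elim (fun k => u (g p.1, Sum.inl k))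
      (fun o => β p.1 * u (g p.1, Sum.inr o)) p.2 := rfl

/-- Key symmetry identity: along the lifted affine subspace through a
symmetry-induced point, the width-`m` loss agrees with the width-`r` loss. -/
lemma loss_lift {din dout r m N : ℕ} (σ : ℝ → ℝ)
    (c : (Fin dout → ℝ) → (Fin dout → ℝ) → ℝ)
    (x : Fin N → Fin din → ℝ) (y : Fin N → Fin dout → ℝ)
    (g : Fin m → Fin r) (β : Fin m → ℝ)
    (θr : NNParam din dout r) (θm : NNParam din dout m)
    (hw : ∀ i, wOf θm i = wOf θr (g i))
    (ha : ∀ i, aOf θm i = β i • aOf θr (g i))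
    (hβ : ∀ t : Fin r, ∑ i ∈ Finset.univ.filter (fun i => g i = t), β i = 1)
    (u : NNParam din dout r) :
    nnLoss σ c x y m (θm + liftMap g β u) = nnLoss σ c x y r (θr + u) := by
  unfold nnLoss
  congr 1
  apply Finset.sum_congr rfl
  intro n _
  congr 1
  funext o
  have hwl : ∀ i, wOf (θm + liftMap g β u) i = wOf (θr + u) (g i) := by
    intro i; funext k
    simp only [wOf, PiLp.add_apply, liftMap_apply, Sum.elim_inl]
    rw [show θm (i, Sum.inl k) = θr (g i, Sum.inl k) from congrFun (hw i) k]
  have hal : ∀ i o', aOf (θm + liftMap g β u) i o' = β i * aOf (θr + u) (g i) o' := by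
    intro i o'
    simp only [aOf, PiLp.add_apply, liftMap_apply, Sum.elim_inr]
    have := congrFun (ha i) o'
    simp only [aOf, Pi.smul_apply, smul_eq_mul] at this
    rw [this]; ring
  calc ∑ i, aOf (θm + liftMap g β u) i o * σ (∑ k, wOf (θm + liftMap g β u) i k * x n k)
      = ∑ i, β i * (aOf (θr + u) (g i) o * σ (∑ k, wOf (θr + u) (g i) k * x n k)) := by
        apply Finset.sum_congr rfl; intro i _; rw [hal, hwl]; ring
    _ = ∑ t, ∑ i ∈ Finset.univ.filter (fun i => g i = t),
          β i * (aOf (θr + u) (g i) o * σ (∑ k, wOf (θr + u) (g i) k * x n k)) :=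
        (Finset.sum_fiberwise _ _ _).symm
    _ = ∑ t, aOf (θr + u) t o * σ (∑ k, wOf (θr + u) t k * x n k) := by
        apply Finset.sum_congr rfl; intro t _
        rw [show ∑ i ∈ Finset.univ.filter (fun i => g i = t),
              β i * (aOf (θr + u) (g i) o * σ (∑ k, wOf (θr + u) (g i) k * x n k))
            = ∑ i ∈ Finset.univ.filter (fun i => g i = t),
              β i * (aOf (θr + u) t o * σ (∑ k, wOf (θr + u) t k * x n k)) from
          Finset.sum_congr rfl (by intro i hi; rw [(Finset.mem_filter.1 hi).2])]
        rw [← Finset.sum_mul, hβ t, one_mul]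

/-- Second derivative of a C² function precomposed with an affine map. -/
lemma secondDeriv_affine_comp {E F : Type*} [NormedAddCommGroup E] [NormedSpace ℝ E]
    [NormedAddCommGroup F] [NormedSpace ℝ F]
    (f : F → ℝ) (hf : ContDiff ℝ 2 f) (T : E →L[ℝ] F) (b : F) (u w : E) :
    fderiv ℝ (fderiv ℝ (fun v => f (b + T v))) 0 u w
      = fderiv ℝ (fderiv ℝ f) b (T u) (T w) := by
  have hdf : ContDiff ℝ 1 (fderiv ℝ f) := hf.fderiv_right (le_refl _)
  have hfd : Differentiable ℝ f := hf.differentiable (by norm_num)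
  have hg : ∀ v : E, HasFDerivAt (fun v' : E => b + T v') T v := fun v =>
    (T.hasFDerivAt).const_add b
  have h1 : ∀ v : E, fderiv ℝ (fun v' => f (b + T v')) v = (fderiv ℝ f (b + T v)).comp T := by
    intro v
    exact (((hfd (b + T v)).hasFDerivAt).comp v (hg v)).fderiv
  set Φ : (F →L[ℝ] ℝ) →L[ℝ] (E →L[ℝ] ℝ) := (ContinuousLinearMap.compL ℝ E F ℝ).flip T with hΦ
  have h2 : HasFDerivAt (fun v : E => fderiv ℝ f (b + T v))
      ((fderiv ℝ (fderiv ℝ f) b).comp T) 0 := by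
    have := ((hdf.differentiable one_ne_zero (b + T 0)).hasFDerivAt).comp 0 (hg 0)
    simp only [map_zero, add_zero] at this; exact this
  have h3 : HasFDerivAt (fun v : E => Φ (fderiv ℝ f (b + T v)))
      (Φ.comp ((fderiv ℝ (fderiv ℝ f) b).comp T)) 0 := (Φ.hasFDerivAt).comp 0 h2
  have h4 : (fun v : E => Φ (fderiv ℝ f (b + T v)))
      = fderiv ℝ (fun v' => f (b + T v')) := by
    funext v; rw [h1 v]; rfl
  rw [← h4, h3.fderiv]
  rfl

end Aux


open RealInnerProductSpace in
/-- Suppose `c` and `σ` are C² and `θr` is an irreducible critical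
point of the width-`r` training loss that is a strict saddle, i.e. there is a
direction `β` with `βᵀ ∇²L^r(θr) β < 0` (where `∇²L(θ) = D(∇L)(θ)` is the Hessian).
Then every symmetry-induced critical point `θm ∈ Θ̄_{r→m}(θr)` is also a strict
saddle of `L^m`: its Hessian has at least one negative eigenvalue, i.e. there is a
direction `v` with `vᵀ ∇²L^m(θm) v < 0`. -/
theorem symmetryInduced_points_are_strict_saddles
    {din dout r m N : ℕ} (hN : 0 < N)
    (σ : ℝ → ℝ) (hσ : ContDiff ℝ 2 σ)
    (c : (Fin dout → ℝ) → (Fin dout → ℝ) → ℝ)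
    (hc0 : ∀ v yv, 0 ≤ c v yv)
    (hceq : ∀ v yv, c v yv = 0 ↔ v = yv)
    (hcC2 : ∀ yv, ContDiff ℝ 2 (fun v => c v yv))
    (x : Fin N → Fin din → ℝ) (y : Fin N → Fin dout → ℝ)
    (θr : NNParam din dout r)
    (hirr : Irreducible' θr)
    (hcrit : gradient (nnLoss σ c x y r) θr = 0)
    (hsaddle : ∃ β : NNParam din dout r,
      ⟪fderiv ℝ (gradient (nnLoss σ c x y r)) θr β, β⟫ < 0)
    (θm : NNParam din dout m)
    (hmem : InSymmetryInducedSet θr θm) :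
    ∃ v : NNParam din dout m,
      ⟪fderiv ℝ (gradient (nnLoss σ c x y m)) θm v, v⟫ < 0 := by
  obtain ⟨g, βc, hgsurj, hw, ha, hsum⟩ := hmem
  obtain ⟨β0, hβ0⟩ := hsaddle
  have hLm := nnLoss_contDiff σ hσ c hcC2 x y m
  have hLr := nnLoss_contDiff σ hσ c hcC2 x y r
  refine ⟨liftMap g βc β0, ?_⟩
  rw [hess_quadform]
  rw [hess_quadform] at hβ0
  have key : fderiv ℝ (fderiv ℝ (nnLoss σ c x y m)) θm (liftMap g βc β0) (liftMap g βc β0)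
      = fderiv ℝ (fderiv ℝ (nnLoss σ c x y r)) θr β0 β0 := by
    rw [← secondDeriv_affine_comp _ hLm (liftMap g βc) θm β0 β0]
    have hfun : (fun v => nnLoss σ c x y m (θm + liftMap g βc v))
        = fun v => nnLoss σ c x y r (θr + v) :=
      funext (loss_lift σ c x y g βc θr θm hw ha hsum)
    rw [hfun]
    have := secondDeriv_affine_comp _ hLr (ContinuousLinearMap.id ℝ _) θr β0 β0
    simpa using this
  rw [key]
  exact hβ0
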